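/- Let d ≥ 2 and let ω : Fin d → ℝ have a non-degenerate Bohr spectrum, i.e., the map (x,y) ↦ ω_x − ω_y is injective on ordered pairs of distinct indices. Let A^{x'|x}_{y'|y} ∈ ℂ have positive semidefinite Choi-type matrix J_{(x',x),(y',y)} = A^{x'|x}_{y'|y} with A^{x'|x}_{y'|y} = 0 whenever ω_{x'} − ω_x ≠ ω_{y'} − ω_y; write A_{x'|x} := A^{x'|x}_{x'|x}, define L_{x'|x} := A_{x'|x} for x' ≠ x and L_{x|x} := −Σ_{z≠x} A_{z|x}, and for x ≠ y set α_{xy} := (1/2)Σ_z (A_{z|x} + A_{z|y}) − A^{x|x}_{y|y}. Assume 0 is a simple eigenvalue of L (algebraic multiplicity one). Then: every nonzero complex eigenvalue λ of L satisfies Re λ < 0; Re α_{xy} ≥ γ_{xy} := (|L_{x|x}| + |L_{y|y}|)/2 > 0 for all x ≠ y; and, defining decoherence times T₂^{xy} := 1/Re(α_{xy}) for the d(d−1)/2 unordered pairs x ≠ y and relaxation times T₁^i := 1/|Re λ_i| for the d−1 nonzero eigenvalues λ_i of L counted with algebraic multiplicity, the harmonic means satisfy ⟨T₂⟩_h ≤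 (d/(d−1)) ⟨T₁⟩_h, where ⟨T₂⟩_h := (d(d−1)/2)/Σ_{x<y} (1/T₂^{xy}) and ⟨T₁⟩_h := (d−1)/Σ_i (1/T₁^i). (Corollary 2, generalisation of T₂ ≤ 2T₁.) -/

import Mathlib

open Matrix Finset Polynomial
open scoped ComplexOrder

lemma myCharpolyEval {n : Type*} [Fintype n] [DecidableEq n] (M : Matrix n n ℂ) (μ : ℂ) :
    M.charpoly.eval μ = (Matrix.diagonal (fun _ => μ) - M).det := by
  have h := RingHom.map_det (Polynomial.evalRingHom μ) (charmatrix M)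
  have h2 : (Polynomial.evalRingHom μ).mapMatrix (charmatrix M)
      = Matrix.diagonal (fun _ => μ) - M := by
    ext i j
    by_cases hij : i = j
    · subst hij; simp [charmatrix_apply_eq]
    · simp [charmatrix_apply_ne _ _ _ hij, Matrix.diagonal_apply_ne _ hij]
  rw [Matrix.charpoly] at *
  simpa [h2] using h

lemma myRootEig {n : Type*} [Fintype n] [DecidableEq n] (M : Matrix n n ℂ) {μ : ℂ}
    (h : M.charpoly.IsRoot μ) :
    Module.End.HasEigenvalue (Matrix.toLin' Mᵀ) μ := by
  have hdet : ((Matrix.diagonal (fun _ : n => μ) - M)ᵀ).det = 0 := by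
    rw [Matrix.det_transpose, ← myCharpolyEval]; exact h
  have hker : ⊥ < LinearMap.ker (Matrix.toLin' ((Matrix.diagonal (fun _ : n => μ) - M)ᵀ)) :=
    LinearMap.bot_lt_ker_of_det_eq_zero (by rwa [LinearMap.det_toLin'])
  obtain ⟨v, hv, hv0⟩ := Submodule.ne_bot_iff _ |>.mp hker.ne'
  rw [LinearMap.mem_ker, Matrix.toLin'_apply] at hv
  have hmv : Mᵀ *ᵥ v = μ • v := by
    have : (Matrix.diagonal (fun _ : n => μ))ᵀ *ᵥ v - Mᵀ *ᵥ v = 0 := by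
      rw [← Matrix.sub_mulVec, ← Matrix.transpose_sub]; exact hv
    have hdiag : (Matrix.diagonal (fun _ : n => μ))ᵀ *ᵥ v = μ • v := by
      funext i
      simp [Matrix.diagonal_transpose, Matrix.mulVec_diagonal]
    rw [hdiag] at this
    linear_combination (norm := module) -this
  exact Module.End.hasEigenvalue_of_hasEigenvector
    ⟨Module.End.mem_eigenspace_iff.mpr (by rw [Matrix.toLin'_apply]; exact hmv), hv0⟩

lemma myTwoZeroCols {d : ℕ} (M : Matrix (Fin d) (Fin d) ℂ) {x y : Fin d} (hxy : x ≠ y)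
    (hx : ∀ j, M j x = 0) (hy : ∀ j, M j y = 0) :
    2 ≤ Polynomial.rootMultiplicity 0 M.charpoly := by
  set N := (charmatrix M)ᵀ with hN
  have hNx : N x = (X : ℂ[X]) • (Pi.single x 1 : Fin d → ℂ[X]) := by
    funext j
    by_cases h : j = x
    · subst h
      simp [hN, Matrix.transpose_apply, charmatrix_apply_eq, hx, Pi.single_eq_same,
        smul_eq_mul]
    · simp [hN, Matrix.transpose_apply, charmatrix_apply_ne _ _ _ h, hx,
        Pi.single_eq_of_ne h]
  set N1 := N.updateRow x (Pi.single x 1 : Fin d → ℂ[X]) with hN1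
  have hNy : N1 y = (X : ℂ[X]) • (Pi.single y 1 : Fin d → ℂ[X]) := by
    rw [hN1, Matrix.updateRow_ne hxy.symm]
    funext j
    by_cases h : j = y
    · subst h
      simp [hN, Matrix.transpose_apply, charmatrix_apply_eq, hy, Pi.single_eq_same,
        smul_eq_mul]
    · simp [hN, Matrix.transpose_apply, charmatrix_apply_ne _ _ _ h, hy,
        Pi.single_eq_of_ne h]
  have key : M.charpoly = X ^ 2 * ((N1.updateRow y (Pi.single y 1 : Fin d → ℂ[X])).det) := by
    have h1 : M.charpoly = N.det := by rw [Matrix.charpoly, ← Matrix.det_transpose]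
    have h2 : N = N.updateRow x ((X : ℂ[X]) • (Pi.single x 1 : Fin d → ℂ[X])) := by
      rw [← hNx, Matrix.updateRow_eq_self]
    have h3 : N1 = N1.updateRow y ((X : ℂ[X]) • (Pi.single y 1 : Fin d → ℂ[X])) := by
      rw [← hNy, Matrix.updateRow_eq_self]
    have h4 : N1.det = X * ((N1.updateRow y (Pi.single y 1 : Fin d → ℂ[X])).det) := by
      conv_lhs => rw [h3]
      rw [Matrix.det_updateRow_smul]
    rw [h1, h2, Matrix.det_updateRow_smul, ← hN1, h4]
    ring
  rw [Polynomial.le_rootMultiplicity_iff (Matrix.charpoly_monic M).ne_zero]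
  rw [key]
  simpa using dvd_mul_right ((X : ℂ[X]) ^ 2) _

lemma myPSDdiag {m : Type*} [Fintype m] [DecidableEq m] {J : Matrix m m ℂ}
    (hPSD : J.PosSemidef) (u : m) : 0 ≤ (J u u).re := by
  have h := hPSD.dotProduct_mulVec_nonneg (Pi.single u 1 : m → ℂ)
  have hs : star (Pi.single u (1:ℂ)) = (Pi.single u 1 : m → ℂ) := by
    funext j; simp [Pi.star_apply, Pi.single_apply, apply_ite (star : ℂ → ℂ)]
  rw [hs, Matrix.mulVec_single, single_dotProduct] at h
  simpa using (Complex.le_def.mp h).1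

lemma myPSDoff {m : Type*} [Fintype m] [DecidableEq m] {J : Matrix m m ℂ}
    (hPSD : J.PosSemidef) (u w : m) :
    2 * (J u w).re ≤ (J u u).re + (J w w).re := by
  set v : m → ℂ := (Pi.single u 1 : m → ℂ) - Pi.single w 1 with hv
  have h := hPSD.dotProduct_mulVec_nonneg v
  have hs : ∀ a : m, star (Pi.single a (1:ℂ)) = (Pi.single a 1 : m → ℂ) := by
    intro a; funext j; simp [Pi.star_apply, Pi.single_apply, apply_ite (star : ℂ → ℂ)]
  have hexp : star v ⬝ᵥ J *ᵥ v = J u u - J u w - (J w u - J w w) := by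
    rw [hv, star_sub, hs, hs, Matrix.mulVec_sub, Matrix.mulVec_single, Matrix.mulVec_single,
      sub_dotProduct, dotProduct_sub, dotProduct_sub,
      single_dotProduct, single_dotProduct, single_dotProduct,
      single_dotProduct]
    simp
  rw [hexp] at h
  have hre := (Complex.le_def.mp h).1
  have hherm : (J w u).re = (J u w).re := by
    have := hPSD.1
    rw [Matrix.IsHermitian] at this
    have h2 : J w u = star (J u w) := by
      conv_lhs => rw [← this]
      simp [Matrix.conjTranspose_apply]
    rw [h2]
    simp
  simp only [Complex.sub_re, Complex.zero_re] at hre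
  linarith

lemma myComb {d : ℕ} (f : Fin d → ℝ) :
    ∑ p ∈ Finset.univ.filter (fun p : Fin d × Fin d => p.1 < p.2), (f p.1 + f p.2)
      = ((d : ℝ) - 1) * ∑ x, f x := by
  set g : Fin d × Fin d → ℝ := fun p => f p.1 + f p.2 with hg
  have htot : ∑ p : Fin d × Fin d, g p = 2 * (d : ℝ) * ∑ x, f x := by
    rw [Fintype.sum_prod_type]
    simp only [hg, Finset.sum_add_distrib, Finset.sum_const, Finset.card_univ,
      Fintype.card_fin, nsmul_eq_mul, ← Finset.mul_sum]
    ring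
  have heq : ∑ p ∈ Finset.univ.filter (fun p : Fin d × Fin d => p.1 = p.2), g p
      = 2 * ∑ x, f x := by
    rw [Finset.sum_filter, Fintype.sum_prod_type]
    simp only [Finset.sum_ite_eq, Finset.mem_univ, if_true, hg, two_mul,
      Finset.sum_add_distrib]
  have hswap : ∑ p ∈ Finset.univ.filter (fun p : Fin d × Fin d => p.2 < p.1), g p
      = ∑ p ∈ Finset.univ.filter (fun p : Fin d × Fin d => p.1 < p.2), g p := by
    refine Finset.sum_nbij' (fun p => (p.2, p.1)) (fun p => (p.2, p.1)) ?_ ?_ ?_ ?_ ?_ <;>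
      simp [hg, add_comm]
  have h1 := Finset.sum_filter_add_sum_filter_not Finset.univ
    (fun p : Fin d × Fin d => p.1 < p.2) g
  have h2 := Finset.sum_filter_add_sum_filter_not
    (Finset.univ.filter (fun p : Fin d × Fin d => ¬ p.1 < p.2))
    (fun p : Fin d × Fin d => p.1 = p.2) g
  have e1 : (Finset.univ.filter (fun p : Fin d × Fin d => ¬ p.1 < p.2)).filter
      (fun p : Fin d × Fin d => p.1 = p.2)
      = Finset.univ.filter (fun p : Fin d × Fin d => p.1 = p.2) := by
    rw [Finset.filter_filter]
    ext p
    simp only [Finset.mem_filter, Finset.mem_univ, true_and]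
    exact ⟨fun h => h.2, fun h => ⟨by rw [h]; exact lt_irrefl _, h⟩⟩
  have e2 : (Finset.univ.filter (fun p : Fin d × Fin d => ¬ p.1 < p.2)).filter
      (fun p : Fin d × Fin d => ¬ p.1 = p.2)
      = Finset.univ.filter (fun p : Fin d × Fin d => p.2 < p.1) := by
    rw [Finset.filter_filter]
    ext p
    simp only [Finset.mem_filter, Finset.mem_univ, true_and]
    constructor
    · rintro ⟨hnlt, hne⟩
      exact lt_of_le_of_ne (le_of_not_gt hnlt) (fun h => hne h.symm)
    · intro h
      exact ⟨fun h' => lt_asymm h h', fun h' => absurd h (h' ▸ lt_irrefl _)⟩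
  rw [e1, e2, hswap] at h2
  rw [← h2] at h1
  rw [heq, htot] at h1
  linarith

theorem generalised_T1_T2
    (d : ℕ) (hd : 2 ≤ d) (ω : Fin d → ℝ)
    (hBohr : ∀ x y x' y' : Fin d, x ≠ y → x' ≠ y' →
      ω x - ω y = ω x' - ω y' → x = x' ∧ y = y')
    (A : Fin d → Fin d → Fin d → Fin d → ℂ)
    (J : Matrix (Fin d × Fin d) (Fin d × Fin d) ℂ)
    (hJ : ∀ x' x y' y, J (x', x) (y', y) = A x' x y' y)
    (hPSD : J.PosSemidef)
    (hcov : ∀ x' x y' y, ω x' - ω x ≠ ω y' - ω y → A x' x y' y = 0)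
    (L : Matrix (Fin d) (Fin d) ℝ)
    (hL : ∀ x' x, L x' x =
      if x' = x then -∑ z ∈ Finset.univ.filter (fun z => z ≠ x), (A z x z x).re
      else (A x' x x' x).re)
    (α : Fin d → Fin d → ℂ)
    (hα : ∀ x y, α x y = (1 / 2) * (∑ z, (A z x z x + A z y z y)) - A x x y y)
    (γ : Fin d → Fin d → ℝ)
    (hγ : ∀ x y, γ x y = (|L x x| + |L y y|) / 2)
    (hsimple : Polynomial.rootMultiplicity 0 (L.map Complex.ofReal).charpoly = 1)
    (T2invSum : ℝ)
    (hT2 : T2invSum =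
      ∑ p ∈ Finset.univ.filter (fun p : Fin d × Fin d => p.1 < p.2), (α p.1 p.2).re)
    (T1invSum : ℝ)
    (hT1 : T1invSum =
      ((((L.map Complex.ofReal).charpoly.roots.filter (fun μ => μ ≠ 0)).map
        (fun μ => |μ.re|)).sum)) :
    (∀ lam ∈ (L.map Complex.ofReal).charpoly.roots, lam ≠ 0 → lam.re < 0) ∧
    (∀ x y : Fin d, x ≠ y → γ x y ≤ (α x y).re ∧ 0 < γ x y) ∧
    (d * (d - 1) / 2 : ℝ) / T2invSum ≤ ((d : ℝ) / (d - 1)) * ((d - 1 : ℝ) / T1invSum) := by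
  set M := L.map Complex.ofReal with hM
  -- diagonal entries of A are real-nonneg
  have hAd : ∀ z x : Fin d, 0 ≤ (A z x z x).re := fun z x => by
    have := myPSDdiag hPSD (z, x); rwa [hJ] at this
  have hLxx : ∀ x, L x x = -∑ z ∈ Finset.univ.filter (fun z => z ≠ x), (A z x z x).re :=
    fun x => by rw [hL x x, if_pos rfl]
  have hLxxle : ∀ x, L x x ≤ 0 := fun x => by
    rw [hLxx x]
    simp only [neg_nonpos]
    exact Finset.sum_nonneg fun z _ => hAd z x
  have habs : ∀ x, |L x x| = ∑ z ∈ Finset.univ.filter (fun z => z ≠ x), (A z x z x).re :=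
    fun x => by rw [abs_of_nonpos (hLxxle x), hLxx x, neg_neg]
  -- Gershgorin
  have hger : ∀ μ ∈ M.charpoly.roots, μ.re ≤ 0 ∧ (μ ≠ 0 → μ.re < 0) := by
    intro μ hμ
    have hroot : M.charpoly.IsRoot μ := Polynomial.isRoot_of_mem_roots hμ
    obtain ⟨k, hk⟩ := eigenvalue_mem_ball (myRootEig M hroot)
    rw [Metric.mem_closedBall, Complex.dist_eq] at hk
    have hrad : ∑ j ∈ Finset.univ.erase k, ‖Mᵀ k j‖ = |L k k| := by
      have hterm : ∀ j ∈ Finset.univ.erase k, ‖Mᵀ k j‖ = (A j k j k).re := by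
        intro j hj
        have hjk : j ≠ k := Finset.ne_of_mem_erase hj
        rw [Matrix.transpose_apply, hM, Matrix.map_apply, Complex.norm_real,
          Real.norm_eq_abs, hL j k, if_neg hjk, abs_of_nonneg (hAd j k)]
      rw [Finset.sum_congr rfl hterm, habs k, Finset.filter_ne']
    have hcc : Mᵀ k k = (L k k : ℂ) := by rw [Matrix.transpose_apply, hM, Matrix.map_apply]
    rw [hrad, hcc] at hk
    have habsk : |L k k| = -(L k k) := abs_of_nonpos (hLxxle k)
    have hre_le : μ.re ≤ 0 := by
      have h1 : |(μ - (L k k : ℂ)).re| ≤ ‖μ - (L k k : ℂ)‖ :=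
        Complex.abs_re_le_norm _
      have h3 := (abs_le.mp (le_trans h1 hk)).2
      have h2 : (μ - (L k k : ℂ)).re = μ.re - L k k := by simp
      rw [h2, habsk] at h3
      linarith
    refine ⟨hre_le, fun hne => ?_⟩
    rcases lt_or_eq_of_le hre_le with h | h
    · exact h
    · exfalso
      have hsq : (μ.re - L k k) * (μ.re - L k k) + μ.im * μ.im ≤ L k k * L k k := by
        have h1 : ‖μ - (L k k : ℂ)‖ * ‖μ - (L k k : ℂ)‖ ≤ |L k k| * |L k k| :=
          mul_self_le_mul_self (norm_nonneg _) hk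
        rw [abs_mul_abs_self] at h1
        have h2 : Complex.normSq (μ - (L k k : ℂ))
            = ‖μ - (L k k : ℂ)‖ * ‖μ - (L k k : ℂ)‖ := by
          rw [Complex.normSq_eq_norm_sq, sq]
        rw [Complex.normSq_apply] at h2
        simp only [Complex.sub_re, Complex.sub_im, Complex.ofReal_re, Complex.ofReal_im,
          sub_zero] at h2
        linarith
      rw [h] at hsq
      have him : μ.im * μ.im ≤ 0 := by nlinarith
      have him0 : μ.im = 0 := mul_self_eq_zero.mp (le_antisymm him (mul_self_nonneg _))
      exact hne (Complex.ext (by simp [h]) (by simp [him0]))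
  -- no two vanishing diagonal entries
  have hzero : ∀ x y : Fin d, x ≠ y → ¬(L x x = 0 ∧ L y y = 0) := by
    rintro x y hxy ⟨h1, h2⟩
    have hcol : ∀ w : Fin d, L w w = 0 → ∀ j, M j w = 0 := by
      intro w hw j
      rw [hM, Matrix.map_apply]
      simp only [Complex.ofReal_eq_zero]
      by_cases hj : j = w
      · rw [hj]; exact hw
      · have hsum : ∑ z ∈ Finset.univ.filter (fun z => z ≠ w), (A z w z w).re = 0 := by
          have hh := habs w
          rw [hw] at hh
          simpa using hh.symm
        have hz := (Finset.sum_eq_zero_iff_of_nonneg (fun z _ => hAd z w)).mp hsum j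
          (Finset.mem_filter.mpr ⟨Finset.mem_univ _, hj⟩)
        rw [hL j w, if_neg hj]
        exact hz
    have h2le := myTwoZeroCols M hxy (hcol x h1) (hcol y h2)
    omega
  
  -- part 2
  have hpart2 : ∀ x y : Fin d, x ≠ y → γ x y ≤ (α x y).re ∧ 0 < γ x y := by
    intro x y hxy
    have hsum_split : ∀ w : Fin d, ∑ z, (A z w z w).re = (A w w w w).re + |L w w| := by
      intro w
      rw [habs w, Finset.filter_ne',
        ← Finset.add_sum_erase Finset.univ (fun z => (A z w z w).re) (Finset.mem_univ w)]
    have hre : (α x y).re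
        = ((A x x x x).re + |L x x| + ((A y y y y).re + |L y y|)) / 2 - (A x x y y).re := by
      rw [hα]
      have h12 : (1 / 2 : ℂ) = ((1 / 2 : ℝ) : ℂ) := by norm_num
      rw [Complex.sub_re, h12, Complex.re_ofReal_mul, Complex.re_sum]
      simp only [Complex.add_re]
      rw [Finset.sum_add_distrib, hsum_split x, hsum_split y]
      ring
    have hoff := myPSDoff hPSD (x, x) (y, y)
    rw [hJ, hJ, hJ] at hoff
    constructor
    · rw [hγ, hre]; linarith
    · by_contra hcon
      push_neg at hcon
      rw [hγ] at hcon
      have hax := abs_nonneg (L x x)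
      have hay := abs_nonneg (L y y)
      exact hzero x y hxy ⟨abs_eq_zero.mp (by linarith), abs_eq_zero.mp (by linarith)⟩
  -- T1 sum identification
  have hS : T1invSum = ∑ x, |L x x| := by
    have htr : M.trace = M.charpoly.roots.sum := Matrix.trace_eq_sum_roots_charpoly M
    set t := M.charpoly.roots with ht
    have hstep1 : ((t.filter (fun μ => μ ≠ 0)).map (fun μ => |μ.re|)).sum
        = (t.map (fun μ => |μ.re|)).sum := by
      conv_rhs => rw [← Multiset.filter_add_not (fun μ => μ ≠ 0) t]
      rw [Multiset.map_add, Multiset.sum_add]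
      have hzero' : ((t.filter (fun μ => ¬ μ ≠ 0)).map (fun μ : ℂ => |μ.re|)).sum = 0 := by
        apply Multiset.sum_eq_zero
        intro a ha
        obtain ⟨μ, hμ, rfl⟩ := Multiset.mem_map.mp ha
        have hm := (Multiset.mem_filter.mp hμ).2
        push_neg at hm
        rw [hm]
        simp
      rw [hzero', add_zero]
    have hstep2 : (t.map (fun μ => |μ.re|)).sum = (t.map (fun μ => -μ.re)).sum := by
      congr 1
      apply Multiset.map_congr rfl
      intro μ hμ
      exact abs_of_nonpos ((hger μ hμ).1)
    have hstep3 : (t.map (fun μ => -μ.re)).sum = -((t.map Complex.re).sum) := by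
      rw [show (fun μ : ℂ => -μ.re) = Neg.neg ∘ Complex.re from rfl,
        ← Multiset.map_map, Multiset.sum_map_neg']
    have hstep4 : (t.map Complex.re).sum = ∑ x, L x x := by
      have hhom : (t.map Complex.re).sum = (t.sum).re := by
        rw [← Complex.coe_reAddGroupHom]
        exact (map_multiset_sum Complex.reAddGroupHom t).symm
      rw [hhom, ← htr, Matrix.trace, Complex.re_sum]
      apply Finset.sum_congr rfl
      intro x _
      rw [Matrix.diag_apply, hM, Matrix.map_apply, Complex.ofReal_re]
    rw [hT1, hstep1, hstep2, hstep3, hstep4, ← Finset.sum_neg_distrib]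
    apply Finset.sum_congr rfl
    intro x _
    rw [abs_of_nonpos (hLxxle x)]
  have hSpos : 0 < T1invSum := by
    rw [hS]
    set i0 : Fin d := ⟨0, by omega⟩
    set i1 : Fin d := ⟨1, by omega⟩
    have hne01 : i0 ≠ i1 := by simp [i0, i1, Fin.ext_iff]
    have hpair := hzero i0 i1 hne01
    have hnonneg : ∀ x ∈ Finset.univ, (0:ℝ) ≤ |L x x| := fun x _ => abs_nonneg _
    rcases (Finset.sum_nonneg hnonneg).lt_or_eq with h | h
    · exact h
    · exfalso
      have hall := (Finset.sum_eq_zero_iff_of_nonneg hnonneg).mp h.symm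
      exact hpair ⟨abs_eq_zero.mp (hall i0 (Finset.mem_univ _)),
        abs_eq_zero.mp (hall i1 (Finset.mem_univ _))⟩
  have hT2ge : ((d : ℝ) - 1) / 2 * T1invSum ≤ T2invSum := by
    rw [hT2, hS]
    have h1 : ∑ p ∈ Finset.univ.filter (fun p : Fin d × Fin d => p.1 < p.2), γ p.1 p.2
        ≤ ∑ p ∈ Finset.univ.filter (fun p : Fin d × Fin d => p.1 < p.2), (α p.1 p.2).re :=
      Finset.sum_le_sum fun p hp =>
        (hpart2 p.1 p.2 (ne_of_lt (Finset.mem_filter.mp hp).2)).1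
    have h2 : ∑ p ∈ Finset.univ.filter (fun p : Fin d × Fin d => p.1 < p.2), γ p.1 p.2
        = ((d : ℝ) - 1) / 2 * ∑ x, |L x x| := by
      have hcomb := myComb (fun x => |L x x|)
      have hγsum : ∑ p ∈ Finset.univ.filter (fun p : Fin d × Fin d => p.1 < p.2), γ p.1 p.2
          = (∑ p ∈ Finset.univ.filter (fun p : Fin d × Fin d => p.1 < p.2),
              (|L p.1 p.1| + |L p.2 p.2|)) / 2 := by
        rw [Finset.sum_div]
        exact Finset.sum_congr rfl fun p _ => by rw [hγ]
      rw [hγsum, hcomb]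
      ring
    linarith
  refine ⟨fun lam hlam hne => ((hger lam hlam).2 hne), hpart2, ?_⟩
  have hd' : (2 : ℝ) ≤ (d : ℝ) := by exact_mod_cast hd
  have hdm1 : (0 : ℝ) < (d : ℝ) - 1 := by linarith
  have hc : 0 < ((d : ℝ) - 1) / 2 * T1invSum := by
    apply mul_pos (by linarith) hSpos
  have hT2pos : 0 < T2invSum := lt_of_lt_of_le hc hT2ge
  calc ((d : ℝ) * ((d : ℝ) - 1) / 2) / T2invSum
      ≤ ((d : ℝ) * ((d : ℝ) - 1) / 2) / (((d : ℝ) - 1) / 2 * T1invSum) := by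
        apply div_le_div_of_nonneg_left _ hc hT2ge
        positivity
    _ = ((d : ℝ) / ((d : ℝ) - 1)) * (((d : ℝ) - 1) / T1invSum) := by
        field_simp
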